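/- arXiv:0704.3281 — 4 statements merged into one kernel-verified Lean document; each statement's English description precedes it below -/
import Mathlib

section
/- Under the hypotheses of the flat-top bias representation, if additionally ∫ |t|^r |φ(t)| dt < ∞ for some r > 0, then sup_x |bias at bandwidth h| = o(h^r) as h → 0⁺; in particular, choosing h = a n^{-1/(2r+1)} yields sup_x |bias| = o(n^{-r/(2r+1)}). -/
open MeasureTheory Real Filter

theorem flat_top_bias_little_o
    (κ : ℝ → ℝ) (hκ_even : ∀ t, κ (-t) = κ t)
    (hκ_int : Integrable κ)
    (hκ_flat : ∀ t : ℝ, |t| ≤ 1 → κ t = 1)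
    (hκ_bdd : ∀ t : ℝ, |κ t| ≤ 1)
    (f : ℝ → ℝ) (hf_nonneg : ∀ x, 0 ≤ f x) (hf_int : Integrable f)
    (hf_dens : ∫ x : ℝ, f x = 1)
    (φ : ℝ → ℂ)
    (hφ : ∀ t : ℝ, φ t = ∫ x : ℝ, Complex.exp (Complex.I * t * x) * (f x : ℂ))
    (r : ℝ) (hr : 0 < r)
    (hφr : Integrable (fun t : ℝ => |t| ^ r * ‖φ t‖))
    (bias : ℝ → ℝ → ℂ)
    (hbias : ∀ h x : ℝ, bias h x = (1 / (2 * Real.pi)) *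
      ∫ t : ℝ, ((κ (t * h) : ℂ) - 1) * φ t * Complex.exp (-Complex.I * t * x))
    (a : ℝ) (ha : 0 < a) :
    Tendsto (fun h : ℝ => (⨆ x : ℝ, ‖bias h x‖) / h ^ r)
      (nhdsWithin 0 (Set.Ioi 0)) (nhds 0) ∧
    Tendsto (fun n : ℕ =>
        (⨆ x : ℝ, ‖bias (a * (n : ℝ) ^ (-(1 / (2 * r + 1)))) x‖) /
          (n : ℝ) ^ (-(r / (2 * r + 1))))
      atTop (nhds 0) := by
  have hπ : (0:ℝ) < π := Real.pi_pos
  -- the dominating function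
  have hM_nonneg : ∀ t : ℝ, 0 ≤ |t| ^ r * ‖φ t‖ := fun t =>
    mul_nonneg (Real.rpow_nonneg (abs_nonneg t) r) (norm_nonneg _)
  have hs_meas : ∀ h : ℝ, MeasurableSet {s : ℝ | 1 < |s| * h} := fun h =>
    measurableSet_lt measurable_const (measurable_abs.mul_const h)
  have hInd_int : ∀ h : ℝ,
      Integrable (fun t => Set.indicator {s : ℝ | 1 < |s| * h}
        (fun s => |s| ^ r * ‖φ s‖) t) := fun h => hφr.indicator (hs_meas h)
  -- the tail integral B
  set B : ℝ → ℝ := fun h =>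
    ∫ t : ℝ, Set.indicator {s : ℝ | 1 < |s| * h} (fun s => |s| ^ r * ‖φ s‖) t with hBdef
  have hB_tendsto : Tendsto B (nhdsWithin 0 (Set.Ioi 0)) (nhds 0) := by
    have key := tendsto_integral_filter_of_dominated_convergence (μ := volume)
      (l := nhdsWithin (0:ℝ) (Set.Ioi 0))
      (F := fun h t => Set.indicator {s : ℝ | 1 < |s| * h} (fun s => |s| ^ r * ‖φ s‖) t)
      (f := fun _ : ℝ => (0:ℝ)) (bound := fun t => |t| ^ r * ‖φ t‖)
      (Eventually.of_forall fun h => hφr.aestronglyMeasurable.indicator (hs_meas h))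
      (Eventually.of_forall fun h => ae_of_all _ fun t => by
        rw [Real.norm_eq_abs,
          abs_of_nonneg (Set.indicator_nonneg (fun s _ => hM_nonneg s) t)]
        exact Set.indicator_le_self' (fun s _ => hM_nonneg s) t)
      hφr
      (ae_of_all _ fun t => by
        have hev : (fun h : ℝ =>
            Set.indicator {s : ℝ | 1 < |s| * h} (fun s => |s| ^ r * ‖φ s‖) t)
            =ᶠ[nhdsWithin (0:ℝ) (Set.Ioi 0)] (fun _ => (0:ℝ)) := by
          have hmem : Set.Ioo (0:ℝ) (1/(|t|+1)) ∈ nhdsWithin (0:ℝ) (Set.Ioi 0) :=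
            Ioo_mem_nhdsGT_of_mem (by constructor <;> positivity)
          filter_upwards [hmem] with h hh
          apply Set.indicator_of_notMem
          simp only [Set.mem_setOf_eq, not_lt]
          have h1 : h < 1/(|t|+1) := hh.2
          have h2 : 0 < |t| + 1 := by positivity
          have h3 : h * (|t|+1) < 1 := (lt_div_iff₀ h2).mp h1
          nlinarith [abs_nonneg t, hh.1]
        exact Tendsto.congr' hev.symm tendsto_const_nhds)
    simpa using key
  -- the uniform bound on the bias
  have hbound : ∀ h : ℝ, 0 < h → ∀ x : ℝ, ‖bias h x‖ ≤ h ^ r * B h / π := by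
    intro h hh x
    rw [hbias h x, norm_mul]
    have hnorm_c : ‖(1 / (2 * (π:ℂ)))‖ = 1 / (2*π) := by
      rw [norm_div, norm_one]
      congr 1
      have h2 : (2 * (π:ℂ)) = ((2*π : ℝ) : ℂ) := by push_cast; ring
      rw [h2, Complex.norm_real, Real.norm_eq_abs, abs_of_pos (by positivity)]
    have hint : ‖∫ t : ℝ, ((κ (t * h) : ℂ) - 1) * φ t * Complex.exp (-Complex.I * t * x)‖
        ≤ (2 * h ^ r) * B h := by
      refine (norm_integral_le_integral_norm _).trans ?_
      have hmono := integral_mono_of_nonneg (μ := volume)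
        (f := fun t : ℝ => ‖((κ (t * h) : ℂ) - 1) * φ t * Complex.exp (-Complex.I * t * x)‖)
        (g := fun t : ℝ => (2 * h ^ r) *
          Set.indicator {s : ℝ | 1 < |s| * h} (fun s => |s| ^ r * ‖φ s‖) t)
        (ae_of_all _ fun t => norm_nonneg _) ((hInd_int h).const_mul _)
        (ae_of_all _ (by
          intro t
          have hexp : ‖Complex.exp (-Complex.I * t * x)‖ = 1 := by
            have he : (-Complex.I * (t:ℂ) * (x:ℂ)) = ((-(t*x):ℝ):ℂ) * Complex.I := by
              push_cast; ring
            rw [he, Complex.norm_exp_ofReal_mul_I]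
          show ‖((κ (t * h) : ℂ) - 1) * φ t * Complex.exp (-Complex.I * t * x)‖ ≤
            (2 * h ^ r) * Set.indicator {s : ℝ | 1 < |s| * h} (fun s => |s| ^ r * ‖φ s‖) t
          rw [norm_mul, norm_mul, hexp, mul_one]
          by_cases hc : t ∈ {s : ℝ | 1 < |s| * h}
          · rw [Set.indicator_of_mem hc]
            have hc' : 1 < |t| * h := hc
            have h2 : ‖((κ (t * h) : ℂ) - 1)‖ ≤ 2 := by
              refine (norm_sub_le _ _).trans ?_
              rw [Complex.norm_real, norm_one, Real.norm_eq_abs]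
              linarith [hκ_bdd (t*h)]
            have h3 : (1:ℝ) ≤ h ^ r * |t| ^ r := by
              rw [← Real.mul_rpow hh.le (abs_nonneg t)]
              exact Real.one_le_rpow (by rw [mul_comm]; linarith) hr.le
            nlinarith [norm_nonneg (φ t), norm_nonneg ((κ (t * h) : ℂ) - 1),
              mul_le_mul_of_nonneg_right h2 (norm_nonneg (φ t)),
              mul_le_mul_of_nonneg_right h3 (norm_nonneg (φ t))]
          · rw [Set.indicator_of_notMem hc]
            have hflat : κ (t * h) = 1 := by
              apply hκ_flat
              rw [abs_mul, abs_of_pos hh]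
              exact not_lt.mp hc
            simp [hflat]))
      calc _ ≤ _ := hmono
        _ = (2 * h ^ r) * B h := by rw [hBdef]; exact integral_const_mul _ _
    calc ‖(1 / (2 * (π:ℂ)))‖ * ‖∫ t : ℝ, ((κ (t * h) : ℂ) - 1) * φ t *
          Complex.exp (-Complex.I * t * x)‖
        ≤ (1 / (2*π)) * ((2 * h ^ r) * B h) := by
          rw [hnorm_c]
          exact mul_le_mul_of_nonneg_left hint (by positivity)
      _ = h ^ r * B h / π := by field_simp
  -- part 1
  have hS_nonneg : ∀ h : ℝ, 0 ≤ ⨆ x : ℝ, ‖bias h x‖ := fun h =>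
    Real.iSup_nonneg fun x => norm_nonneg _
  have part1 : Tendsto (fun h : ℝ => (⨆ x : ℝ, ‖bias h x‖) / h ^ r)
      (nhdsWithin 0 (Set.Ioi 0)) (nhds 0) := by
    have hBπ : Tendsto (fun h => B h / π) (nhdsWithin 0 (Set.Ioi 0)) (nhds 0) := by
      simpa using hB_tendsto.div_const π
    refine tendsto_of_tendsto_of_tendsto_of_le_of_le' tendsto_const_nhds hBπ ?_ ?_
    · filter_upwards [self_mem_nhdsWithin] with h hh
      exact div_nonneg (hS_nonneg h) (Real.rpow_nonneg (le_of_lt hh) r)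
    · filter_upwards [self_mem_nhdsWithin] with h hh
      have hh' : (0:ℝ) < h := hh
      have hhr : 0 < h ^ r := Real.rpow_pos_of_pos hh' r
      rw [div_le_iff₀ hhr]
      calc (⨆ x : ℝ, ‖bias h x‖) ≤ h ^ r * B h / π := ciSup_le (hbound h hh')
        _ = B h / π * h ^ r := by ring
  refine ⟨part1, ?_⟩
  -- part 2
  have hc : 0 < 1/(2*r+1) := by positivity
  have hseq : Tendsto (fun n : ℕ => a * (n:ℝ) ^ (-(1/(2*r+1)))) atTop
      (nhdsWithin 0 (Set.Ioi 0)) := by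
    rw [tendsto_nhdsWithin_iff]
    constructor
    · have h0 : Tendsto (fun n : ℕ => (n:ℝ) ^ (-(1/(2*r+1)))) atTop (nhds 0) :=
        (tendsto_rpow_neg_atTop hc).comp tendsto_natCast_atTop_atTop
      simpa using h0.const_mul a
    · filter_upwards [eventually_gt_atTop 0] with n hn
      have hn' : (0:ℝ) < n := by exact_mod_cast hn
      exact Set.mem_Ioi.mpr (mul_pos ha (Real.rpow_pos_of_pos hn' _))
  have comp2 := (part1.comp hseq).const_mul (a ^ r)
  rw [mul_zero] at comp2
  refine Tendsto.congr' ?_ comp2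
  filter_upwards [eventually_gt_atTop 0] with n hn
  have hn' : (0:ℝ) < n := by exact_mod_cast hn
  have hden : (a * (n:ℝ) ^ (-(1/(2*r+1)))) ^ r = a ^ r * (n:ℝ) ^ (-(r/(2*r+1))) := by
    rw [Real.mul_rpow ha.le (Real.rpow_nonneg hn'.le _), ← Real.rpow_mul hn'.le]
    congr 1
    ring
  have har : (0:ℝ) < a ^ r := Real.rpow_pos_of_pos ha r
  have hnr : (0:ℝ) < (n:ℝ) ^ (-(r/(2*r+1))) := Real.rpow_pos_of_pos hn' _
  simp only [Function.comp_apply]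
  rw [hden]
  field_simp
end

section
/- Under the hypotheses of the flat-top bias representation, if |φ(t)| ≤ D e^{-d|t|} with d > 0, and h_n = 1/(a log n) with a > 1/(2d), then sup_x |bias at bandwidth h_n| = O(n^{-da}) = O(n^{-1/2}). -/
open MeasureTheory Real Filter Set

lemma tail_set_eq (T : ℝ) : {t : ℝ | T < |t|} = Iio (-T) ∪ Ioi T := by
  ext t
  simp only [Set.mem_setOf_eq, lt_abs, Set.mem_union, Set.mem_Iio, Set.mem_Ioi, lt_neg]
  tauto

lemma intOn_Ioi {d : ℝ} (hd : 0 < d) (T : ℝ) (hT : 0 ≤ T) :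
    IntegrableOn (fun t : ℝ => Real.exp (-d * |t|)) (Ioi T) := by
  refine (exp_neg_integrableOn_Ioi T hd).congr_fun (fun t ht => ?_) measurableSet_Ioi
  rw [abs_of_pos (lt_of_le_of_lt hT ht)]

lemma intOn_Iio {d : ℝ} (hd : 0 < d) (T : ℝ) (hT : 0 ≤ T) :
    IntegrableOn (fun t : ℝ => Real.exp (-d * |t|)) (Iio (-T)) := by
  have m : MeasurableEmbedding fun x : ℝ => -x := (Homeomorph.neg ℝ).measurableEmbedding
  have : IntegrableOn (fun t : ℝ => Real.exp (-d * |(-t)|)) (Ioi T) := by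
    simpa [abs_neg] using intOn_Ioi hd T hT
  have := (m.integrableOn_map_iff (f := fun t : ℝ => Real.exp (-d * |t|))
    (μ := volume) (s := Iio (-T)))
  rw [Measure.map_neg_eq_self] at this
  rw [this]
  simp only [Function.comp_def, neg_preimage, neg_Iio]
  simpa [neg_mul] using intOn_Ioi hd T hT

lemma tail_integral {d : ℝ} (hd : 0 < d) (T : ℝ) (hT : 0 ≤ T) :
    ∫ t in {t : ℝ | T < |t|}, Real.exp (-d * |t|) = 2 / d * Real.exp (-d * T) := by
  rw [tail_set_eq]
  rw [setIntegral_union (by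
      intro s hs1 hs2 t ht
      have h1 := hs1 ht; have h2 := hs2 ht
      simp only [Set.mem_Iio, Set.mem_Ioi] at h1 h2
      exact absurd (h2.trans h1) (by simp; linarith)) measurableSet_Ioi
    (intOn_Iio hd T hT) (intOn_Ioi hd T hT)]
  have h1 : ∫ t in Ioi T, Real.exp (-d * |t|) = ∫ t in Ioi T, Real.exp (-d * t) :=
    setIntegral_congr_fun measurableSet_Ioi fun t ht =>
      by rw [abs_of_pos (lt_of_le_of_lt hT ht)]
  have h2 : ∫ t in Ioi T, Real.exp (-d * t) = d⁻¹ * Real.exp (-(d * T)) := by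
    have := integral_comp_mul_left_Ioi (fun x : ℝ => Real.exp (-x)) T hd
    simp only [smul_eq_mul] at this
    rw [show (fun t : ℝ => Real.exp (-d * t)) = fun t : ℝ => Real.exp (-(d * t)) by
      funext t; ring_nf]
    rw [this, integral_exp_neg_Ioi]
  have h3 : ∫ t in Iio (-T), Real.exp (-d * |t|) = ∫ t in Ioi T, Real.exp (-d * |t|) := by
    rw [← integral_Iic_eq_integral_Iio, ← integral_comp_neg_Ioi]
    simp [abs_neg]
  rw [h3, h1, h2]
  field_simp
  ring
theorem flat_top_bias_exponential_rate
    (κ : ℝ → ℝ) (hκ_even : ∀ t, κ (-t) = κ t)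
    (hκ_int : Integrable κ)
    (hκ_flat : ∀ t : ℝ, |t| ≤ 1 → κ t = 1)
    (hκ_bdd : ∀ t : ℝ, |κ t| ≤ 1)
    (f : ℝ → ℝ) (hf_nonneg : ∀ x, 0 ≤ f x) (hf_int : Integrable f)
    (hf_dens : ∫ x : ℝ, f x = 1)
    (φ : ℝ → ℂ)
    (hφ : ∀ t : ℝ, φ t = ∫ x : ℝ, Complex.exp (Complex.I * t * x) * (f x : ℂ))
    (D d : ℝ) (hD : 0 < D) (hd : 0 < d)
    (hφ_decay : ∀ t : ℝ, ‖φ t‖ ≤ D * Real.exp (-d * |t|))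
    (bias : ℝ → ℝ → ℂ)
    (hbias : ∀ h x : ℝ, bias h x = (1 / (2 * Real.pi)) *
      ∫ t in {t : ℝ | 1 / h < |t|},
        ((κ (t * h) : ℂ) - 1) * φ t * Complex.exp (-Complex.I * t * x))
    (a : ℝ) (ha : 1 / (2 * d) < a) :
    ∃ C : ℝ, 0 < C ∧ ∀ n : ℕ, 2 ≤ n →
      (⨆ x : ℝ, ‖bias (1 / (a * Real.log n)) x‖) ≤ C * (n : ℝ) ^ (-(d * a)) ∧
      (⨆ x : ℝ, ‖bias (1 / (a * Real.log n)) x‖) ≤ C * (n : ℝ) ^ (-(1 / 2) : ℝ) := by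
  have hπ : (0:ℝ) < Real.pi := Real.pi_pos
  have ha0 : 0 < a := lt_trans (by positivity) ha
  have hda : 1 / 2 ≤ d * a := by
    rw [div_lt_iff₀ (by positivity)] at ha
    nlinarith
  refine ⟨2 * D / (Real.pi * d), by positivity, fun n hn => ?_⟩
  set C : ℝ := 2 * D / (Real.pi * d) with hC
  have hn1 : (1:ℝ) < (n:ℝ) := by exact_mod_cast lt_of_lt_of_le one_lt_two hn
  have hn0 : (0:ℝ) < (n:ℝ) := lt_trans one_pos hn1
  have hlog : 0 < Real.log n := Real.log_pos hn1
  set T : ℝ := a * Real.log n with hTdef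
  have hT : 0 < T := by positivity
  have hinv : 1 / (1 / T) = T := one_div_one_div T
  -- pointwise sup bound
  have key : ∀ x : ℝ, ‖bias (1 / T) x‖ ≤ C * (n:ℝ) ^ (-(d * a)) := by
    intro x
    rw [hbias]
    have hS : IntegrableOn (fun t : ℝ => 2 * D * Real.exp (-d * |t|))
        {t : ℝ | T < |t|} volume := by
      rw [tail_set_eq]
      exact (((intOn_Iio hd T hT.le).union (intOn_Ioi hd T hT.le)).const_mul (2 * D))
    have hbnd : ∀ t : ℝ,
        ‖((κ (t * (1 / T)) : ℂ) - 1) * φ t * Complex.exp (-Complex.I * t * x)‖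
          ≤ 2 * D * Real.exp (-d * |t|) := by
      intro t
      rw [norm_mul, norm_mul]
      have e1 : ‖Complex.exp (-Complex.I * t * x)‖ = 1 := by
        rw [Complex.norm_exp]
        simp
      have e2 : ‖((κ (t * (1 / T)) : ℂ) - 1)‖ ≤ 2 := by
        refine le_trans (norm_sub_le _ _) ?_
        have := hκ_bdd (t * (1 / T))
        rw [Complex.norm_real, Real.norm_eq_abs, norm_one]
        linarith
      have e3 := hφ_decay t
      have h0 : 0 ≤ Real.exp (-d * |t|) := (Real.exp_pos _).le
      calc ‖((κ (t * (1 / T)) : ℂ) - 1)‖ * ‖φ t‖ * ‖Complex.exp (-Complex.I * t * x)‖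
          ≤ 2 * (D * Real.exp (-d * |t|)) * 1 := by
            refine mul_le_mul (mul_le_mul e2 e3 (norm_nonneg _) (by norm_num))
              (le_of_eq e1) (norm_nonneg _) (by positivity)
        _ = 2 * D * Real.exp (-d * |t|) := by ring
    have hle : ‖∫ t in {t : ℝ | 1 / (1 / T) < |t|},
        ((κ (t * (1 / T)) : ℂ) - 1) * φ t * Complex.exp (-Complex.I * t * x)‖
          ≤ 2 * D * (2 / d * Real.exp (-d * T)) := by
      rw [hinv]
      calc ‖∫ t in {t : ℝ | T < |t|},
            ((κ (t * (1 / T)) : ℂ) - 1) * φ t * Complex.exp (-Complex.I * t * x)‖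
          ≤ ∫ t in {t : ℝ | T < |t|}, 2 * D * Real.exp (-d * |t|) :=
            norm_integral_le_of_norm_le hS (Eventually.of_forall fun t => hbnd t)
        _ = 2 * D * (2 / d * Real.exp (-d * T)) := by
            rw [integral_const_mul, tail_integral hd T hT.le]
    have hrpow : (n:ℝ) ^ (-(d * a)) = Real.exp (-d * T) := by
      rw [Real.rpow_def_of_pos hn0]
      congr 1
      rw [hTdef]; ring
    rw [norm_mul]
    have hnorm1 : ‖((1 : ℂ) / (2 * (Real.pi : ℂ)))‖ = 1 / (2 * Real.pi) := by
      rw [norm_div, norm_one, norm_mul]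
      simp [abs_of_pos hπ]
    calc ‖(1 / (2 * (Real.pi:ℂ)))‖ * ‖∫ t in {t : ℝ | 1 / (1 / T) < |t|},
            ((κ (t * (1 / T)) : ℂ) - 1) * φ t * Complex.exp (-Complex.I * t * x)‖
        ≤ (1 / (2 * Real.pi)) * (2 * D * (2 / d * Real.exp (-d * T))) := by
          rw [hnorm1]
          exact mul_le_mul_of_nonneg_left hle (by positivity)
      _ = C * Real.exp (-d * T) := by
          rw [hC]; field_simp
      _ = C * (n:ℝ) ^ (-(d * a)) := by rw [hrpow]
  have hsup : (⨆ x : ℝ, ‖bias (1 / T) x‖) ≤ C * (n:ℝ) ^ (-(d * a)) :=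
    ciSup_le key
  refine ⟨hsup, le_trans hsup ?_⟩
  have : (n:ℝ) ^ (-(d * a)) ≤ (n:ℝ) ^ (-(1/2) : ℝ) :=
    Real.rpow_le_rpow_of_exponent_le hn1.le (by linarith)
  exact mul_le_mul_of_nonneg_left this (by positivity)
end

section
/- Under the hypotheses of the flat-top bias representation, if φ(t) = 0 for |t| ≥ b and 0 < h ≤ 1/b, then the bias is identically zero: for all x, (1/(2π)) ∫ (κ(th) − 1) φ(t) e^{-itx} dt = 0. -/
open MeasureTheory Real

theorem flat_top_bias_zero_of_bandlimited
    (κ : ℝ → ℝ) (hκ_even : ∀ t, κ (-t) = κ t)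
    (hκ_int : Integrable κ)
    (hκ_flat : ∀ t : ℝ, |t| ≤ 1 → κ t = 1)
    (hκ_bdd : ∀ t : ℝ, |κ t| ≤ 1)
    (f : ℝ → ℝ) (hf_nonneg : ∀ x, 0 ≤ f x) (hf_int : Integrable f)
    (hf_dens : ∫ x : ℝ, f x = 1)
    (φ : ℝ → ℂ)
    (hφ : ∀ t : ℝ, φ t = ∫ x : ℝ, Complex.exp (Complex.I * t * x) * (f x : ℂ))
    (b : ℝ) (hb : 0 < b)
    (hφ_supp : ∀ t : ℝ, b ≤ |t| → φ t = 0)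
    (h : ℝ) (hh : 0 < h) (hhb : h ≤ 1 / b) :
    ∀ x : ℝ, (1 / (2 * Real.pi)) *
      (∫ t : ℝ, ((κ (t * h) : ℂ) - 1) * φ t * Complex.exp (-Complex.I * t * x)) = 0 := by
  intro x
  have hzero : (fun t : ℝ => ((κ (t * h) : ℂ) - 1) * φ t * Complex.exp (-Complex.I * t * x))
      = fun _ => 0 := by
    funext t
    by_cases ht : b ≤ |t|
    · rw [hφ_supp t ht]; ring
    · push_neg at ht
      have h1 : |t * h| ≤ 1 := by
        rw [abs_mul, abs_of_pos hh]
        have : |t| * h < b * h := by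
          exact mul_lt_mul_of_pos_right ht hh
        have hbh : b * h ≤ 1 := by
          rw [le_div_iff₀ hb] at hhb
          linarith [hhb]
        linarith
      rw [hκ_flat _ h1]
      simp
  rw [hzero, integral_zero, mul_zero]
end

section
/- Suppose f is a density whose characteristic function φ satisfies ∫ |t|^{r+p} |φ(t)| dt < ∞ for some r > 0 and natural number p. With a flat-top kernel (κ ≡ 1 on [−1,1], |κ| ≤ 1, κ and |t|^pκ(t) integrable), the bias of the p-th derivative estimator, given by (1/(2π)) ∫ (−it)^p (κ(th) − 1) φ(t) e^{-itx} dt, satisfies sup_x |bias| ≤ (1/π) ∫_{|t|>1/h} |t|^p |φ(t)| dt = o(h^r) as h → 0⁺. -/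
open MeasureTheory Real Filter

theorem derivative_estimator_bias_little_o
    (p : ℕ) (r : ℝ) (hr : 0 < r)
    (κ : ℝ → ℝ) (hκ_even : ∀ t, κ (-t) = κ t)
    (hκ_int : Integrable κ)
    (hκp_int : Integrable (fun t : ℝ => |t| ^ p * κ t))
    (hκ_flat : ∀ t : ℝ, |t| ≤ 1 → κ t = 1)
    (hκ_bdd : ∀ t : ℝ, |κ t| ≤ 1)
    (f : ℝ → ℝ) (hf_nonneg : ∀ x, 0 ≤ f x) (hf_int : Integrable f)
    (hf_dens : ∫ x : ℝ, f x = 1)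
    (φ : ℝ → ℂ)
    (hφ : ∀ t : ℝ, φ t = ∫ x : ℝ, Complex.exp (Complex.I * t * x) * (f x : ℂ))
    (hφrp : Integrable (fun t : ℝ => |t| ^ (r + p) * ‖φ t‖))
    (bias : ℝ → ℝ → ℂ)
    (hbias : ∀ h x : ℝ, bias h x = (1 / (2 * Real.pi)) *
      ∫ t : ℝ, (-Complex.I * t) ^ p * ((κ (t * h) : ℂ) - 1) * φ t *
        Complex.exp (-Complex.I * t * x)) :
    (∀ h : ℝ, 0 < h →
      (⨆ x : ℝ, ‖bias h x‖) ≤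
        (1 / Real.pi) * ∫ t in {t : ℝ | 1 / h < |t|}, |t| ^ p * ‖φ t‖) ∧
    Tendsto (fun h : ℝ => (⨆ x : ℝ, ‖bias h x‖) / h ^ r)
      (nhdsWithin 0 (Set.Ioi 0)) (nhds 0) := by
  set g : ℝ → ℝ := fun t => |t| ^ (r + (p:ℝ)) * ‖φ t‖ with hg_def
  have hgint : Integrable g := hφrp
  have hg0 : ∀ t, 0 ≤ g t := fun t =>
    mul_nonneg (Real.rpow_nonneg (abs_nonneg t) _) (norm_nonneg _)
  have hSm : ∀ M : ℝ, MeasurableSet {t : ℝ | M < |t|} := fun M =>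
    (isOpen_lt continuous_const continuous_abs).measurableSet
  -- a.e. measurability of ‖φ‖
  have hne : ∀ᵐ t : ℝ, t ≠ 0 := by
    rw [ae_iff]
    simpa using measure_singleton (0 : ℝ)
  have hφm : AEStronglyMeasurable (fun t : ℝ => ‖φ t‖) volume := by
    have h2 : AEStronglyMeasurable
        (fun t : ℝ => |t| ^ (-(r + (p:ℝ))) * (|t| ^ (r + (p:ℝ)) * ‖φ t‖)) volume :=
      ((by measurability : Measurable (fun t : ℝ => |t| ^ (-(r + (p:ℝ))))).aestronglyMeasurable).mul hφrp.aestronglyMeasurable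
    refine h2.congr ?_
    filter_upwards [hne] with t ht
    rw [← mul_assoc, ← Real.rpow_add (abs_pos.mpr ht), neg_add_cancel, Real.rpow_zero, one_mul]
  have hpm : AEStronglyMeasurable (fun t : ℝ => |t| ^ p * ‖φ t‖) volume :=
    ((measurable_abs.pow_const p).aestronglyMeasurable).mul hφm
  -- key pointwise inequality on the tail
  have hkey : ∀ h : ℝ, 0 < h → ∀ t : ℝ, t ∈ {t : ℝ | 1 / h < |t|} →
      |t| ^ p * ‖φ t‖ ≤ h ^ r * (|t| ^ (r + (p:ℝ)) * ‖φ t‖) := by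
    intro h hh t ht
    have ht' : 1 / h < |t| := ht
    have ht0 : 0 < |t| := lt_trans (by positivity) ht'
    have h1 : (1:ℝ) ≤ h * |t| := by
      have := (div_lt_iff₀ hh).mp ht'
      nlinarith
    have h2 : (1:ℝ) ≤ (h * |t|) ^ r := Real.one_le_rpow h1 hr.le
    have hre : h ^ r * |t| ^ (r + (p:ℝ)) = (h * |t|) ^ r * |t| ^ (p:ℝ) := by
      rw [Real.rpow_add ht0, Real.mul_rpow hh.le (abs_nonneg t), mul_assoc]
    rw [← mul_assoc, hre, ← Real.rpow_natCast |t| p]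
    have : |t| ^ (p:ℝ) * ‖φ t‖ ≤ ((h * |t|) ^ r * |t| ^ (p:ℝ)) * ‖φ t‖ := by
      apply mul_le_mul_of_nonneg_right _ (norm_nonneg _)
      exact le_mul_of_one_le_left (Real.rpow_nonneg (abs_nonneg t) _) h2
    exact this
  -- integrability on the tail
  have hIntOn : ∀ h : ℝ, 0 < h →
      IntegrableOn (fun t : ℝ => |t| ^ p * ‖φ t‖) {t : ℝ | 1 / h < |t|} volume := by
    intro h hh
    refine Integrable.mono' ((hφrp.const_mul (h ^ r)).integrableOn) hpm.restrict ?_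
    rw [ae_restrict_iff' (hSm _)]
    refine ae_of_all _ fun t ht => ?_
    rw [Real.norm_eq_abs, abs_of_nonneg (by positivity)]
    exact hkey h hh t ht
  -- Part 1
  have part1 : ∀ h : ℝ, 0 < h →
      (⨆ x : ℝ, ‖bias h x‖) ≤
        (1 / Real.pi) * ∫ t in {t : ℝ | 1 / h < |t|}, |t| ^ p * ‖φ t‖ := by
    intro h hh
    set S : Set ℝ := {t : ℝ | 1 / h < |t|} with hS_def
    set D : ℝ → ℝ := S.indicator (fun t => 2 * (|t| ^ p * ‖φ t‖)) with hD_def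
    have hD_int : Integrable D :=
      IntegrableOn.integrable_indicator ((hIntOn h hh).const_mul 2) (hSm _)
    refine ciSup_le fun x => ?_
    rw [hbias]
    set F : ℝ → ℂ := fun t => (-Complex.I * t) ^ p * ((κ (t * h) : ℂ) - 1) * φ t *
      Complex.exp (-Complex.I * t * x) with hF_def
    have hFnorm : ∀ t : ℝ, ‖F t‖ = |t| ^ p * (|κ (t * h) - 1| * ‖φ t‖) := by
      intro t
      have e1 : ‖(-Complex.I * (t:ℂ)) ^ p‖ = |t| ^ p := by
        rw [norm_pow]
        simp [Complex.norm_real]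
      have e2 : ‖((κ (t * h) : ℂ) - 1)‖ = |κ (t * h) - 1| := by
        rw [show ((κ (t * h) : ℂ) - 1) = ((κ (t * h) - 1 : ℝ) : ℂ) by push_cast; ring,
          Complex.norm_real, Real.norm_eq_abs]
      have e3 : ‖Complex.exp (-Complex.I * t * x)‖ = 1 := by
        rw [show (-Complex.I * (t:ℂ) * (x:ℂ)) = ((-(t * x) : ℝ) : ℂ) * Complex.I by
          push_cast; ring]
        exact Complex.norm_exp_ofReal_mul_I _
      rw [hF_def]
      simp only [norm_mul, e1, e2, e3, mul_one]
      ring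
    have hFD : ∀ t : ℝ, ‖F t‖ ≤ D t := by
      intro t
      by_cases htS : t ∈ S
      · rw [hFnorm t, hD_def, Set.indicator_of_mem htS]
        have : |κ (t * h) - 1| ≤ 2 := by
          calc |κ (t * h) - 1| ≤ |κ (t * h)| + |(1:ℝ)| := abs_sub _ _
            _ ≤ 1 + 1 := by have := hκ_bdd (t * h); simp at *; linarith
            _ = 2 := by norm_num
        calc |t| ^ p * (|κ (t * h) - 1| * ‖φ t‖) ≤ |t| ^ p * (2 * ‖φ t‖) := by
              apply mul_le_mul_of_nonneg_left _ (by positivity)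
              exact mul_le_mul_of_nonneg_right this (norm_nonneg _)
          _ = 2 * (|t| ^ p * ‖φ t‖) := by ring
      · have ht : |t| ≤ 1 / h := le_of_not_gt htS
        have hth : |t * h| ≤ 1 := by
          rw [abs_mul, abs_of_pos hh]
          calc |t| * h ≤ (1 / h) * h := mul_le_mul_of_nonneg_right ht hh.le
            _ = 1 := by field_simp
        have hκ1 : κ (t * h) = 1 := hκ_flat _ hth
        rw [hFnorm t, hκ1, hD_def, Set.indicator_of_notMem htS]
        simp
    have hcnorm : ‖(1 / (2 * (Real.pi : ℂ)))‖ = 1 / (2 * Real.pi) := by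
      rw [norm_div, norm_one, norm_mul]
      simp [Complex.norm_real, abs_of_pos Real.pi_pos]
    calc ‖(1 / (2 * (Real.pi : ℂ))) * ∫ t : ℝ, F t‖
        = (1 / (2 * Real.pi)) * ‖∫ t : ℝ, F t‖ := by rw [norm_mul, hcnorm]
      _ ≤ (1 / (2 * Real.pi)) * ∫ t : ℝ, ‖F t‖ := by
          apply mul_le_mul_of_nonneg_left (norm_integral_le_integral_norm _) (by positivity)
      _ ≤ (1 / (2 * Real.pi)) * ∫ t : ℝ, D t := by
          apply mul_le_mul_of_nonneg_left _ (by positivity)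
          exact integral_mono_of_nonneg (ae_of_all _ fun t => norm_nonneg _) hD_int
            (ae_of_all _ hFD)
      _ = (1 / Real.pi) * ∫ t in S, |t| ^ p * ‖φ t‖ := by
          rw [hD_def, integral_indicator (hSm _), integral_const_mul, ← hS_def]
          have hπ : Real.pi ≠ 0 := Real.pi_ne_zero
          field_simp
  refine ⟨part1, ?_⟩
  -- comparison of set integrals
  have hcmp : ∀ h : ℝ, 0 < h →
      ∫ t in {t : ℝ | 1 / h < |t|}, |t| ^ p * ‖φ t‖ ≤
        h ^ r * ∫ t in {t : ℝ | 1 / h < |t|}, g t := by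
    intro h hh
    rw [← integral_const_mul]
    exact setIntegral_mono_on (hIntOn h hh) ((hφrp.const_mul (h ^ r)).integrableOn)
      (hSm _) (hkey h hh)
  -- tail integral tends to zero
  have tail : Tendsto (fun M : ℝ => ∫ t in {t : ℝ | M < |t|}, g t) atTop (nhds 0) := by
    have h0 : Tendsto (fun M : ℝ => ∫ t : ℝ, ({t : ℝ | M < |t|}).indicator g t) atTop
        (nhds (∫ _t : ℝ, (0:ℝ))) := by
      refine tendsto_integral_filter_of_dominated_convergence g
        (Eventually.of_forall fun M => hgint.aestronglyMeasurable.indicator (hSm M))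
        (Eventually.of_forall fun M => ae_of_all _ fun t => ?_)
        hgint (ae_of_all _ fun t => ?_)
      · exact (norm_indicator_le_norm_self g t).trans
          (le_of_eq (by rw [Real.norm_eq_abs, abs_of_nonneg (hg0 t)]))
      · have hev : (fun M : ℝ => ({t' : ℝ | M < |t'|}).indicator g t) =ᶠ[atTop] fun _ => (0:ℝ) := by
          filter_upwards [eventually_ge_atTop |t|] with M hM
          exact Set.indicator_of_notMem (by simpa using not_lt.mpr hM) _
        exact Tendsto.congr' hev.symm tendsto_const_nhds
    simp only [integral_zero] at h0
    exact h0.congr fun M => integral_indicator (hSm M)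
  have hinv : Tendsto (fun h : ℝ => 1 / h) (nhdsWithin 0 (Set.Ioi 0)) atTop := by
    simpa [one_div] using tendsto_inv_nhdsGT_zero
  have hG : Tendsto (fun h : ℝ => (1 / Real.pi) * ∫ t in {t : ℝ | 1 / h < |t|}, g t)
      (nhdsWithin 0 (Set.Ioi 0)) (nhds 0) := by
    have := (tail.comp hinv).const_mul (1 / Real.pi)
    simpa using this
  refine squeeze_zero' ?_ ?_ hG
  · filter_upwards [self_mem_nhdsWithin] with h hh
    exact div_nonneg (Real.iSup_nonneg fun x => norm_nonneg _)
      (Real.rpow_nonneg (le_of_lt hh) r)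
  · filter_upwards [self_mem_nhdsWithin] with h hh
    have hh' : (0:ℝ) < h := hh
    rw [div_le_iff₀ (Real.rpow_pos_of_pos hh' r)]
    calc (⨆ x : ℝ, ‖bias h x‖)
        ≤ (1 / Real.pi) * ∫ t in {t : ℝ | 1 / h < |t|}, |t| ^ p * ‖φ t‖ := part1 h hh'
      _ ≤ (1 / Real.pi) * (h ^ r * ∫ t in {t : ℝ | 1 / h < |t|}, g t) :=
          mul_le_mul_of_nonneg_left (hcmp h hh') (by positivity)
      _ = ((1 / Real.pi) * ∫ t in {t : ℝ | 1 / h < |t|}, g t) * h ^ r := by ring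
end
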